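/- arXiv:2108.09035 — 3 statements merged into one kernel-verified Lean document; each statement's English description precedes it below -/
import Mathlib

section
/- Define f(z) := ((δ(1-k)-1)/(δ(1-k))) L̄^{(1-k)(1-δ)/(1-δ(1-k))} z^{δ(1-k)/(δ(1-k)-1)} + (k/(δ(1-k)))((1-δ)/(δw))^{(1-k)(1-δ)/k} z^{-(1-k)/k} + wL̄z for z>0, and ỹ₁ := L̄^{-k}((1-δ)/(δw))^{1-δ(1-k)}. Then f(ỹ₁) = 0 and f'(ỹ₁) = 0. -/
/-- The auxiliary function f satisfies f(ỹ₁) = 0 and f'(ỹ₁) = 0,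
where ỹ₁ = L̄^{-k} ((1-δ)/(δw))^{1-δ(1-k)}. -/
theorem stmt9 (k δ w Lbar : ℝ)
    (hk : 1 < k) (hδ0 : 0 < δ) (hδ1 : δ < 1) (hw : 0 < w) (hLbar : 0 < Lbar)
    (f : ℝ → ℝ)
    (hf : ∀ z, f z = (δ * (1 - k) - 1) / (δ * (1 - k)) *
      Lbar ^ ((1 - k) * (1 - δ) / (1 - δ * (1 - k))) * z ^ (δ * (1 - k) / (δ * (1 - k) - 1)) +
      k / (δ * (1 - k)) * ((1 - δ) / (δ * w)) ^ ((1 - k) * (1 - δ) / k) * z ^ (-(1 - k) / k) +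
      w * Lbar * z)
    (ytilde₁ : ℝ)
    (hytilde₁ : ytilde₁ = Lbar ^ (-k) * ((1 - δ) / (δ * w)) ^ (1 - δ * (1 - k))) :
    f ytilde₁ = 0 ∧ deriv f ytilde₁ = 0 := by
  have hA : (0:ℝ) < Lbar := hLbar
  have hB : (0:ℝ) < (1 - δ) / (δ * w) := div_pos (by linarith) (by positivity)
  set A := Lbar with hAdef
  set B := (1 - δ) / (δ * w) with hBdef
  have hy : 0 < ytilde₁ := by rw [hytilde₁]; positivity
  have hD : δ * (1 - k) < 0 := mul_neg_of_pos_of_neg hδ0 (by linarith)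
  have hDne : δ * (1 - k) ≠ 0 := ne_of_lt hD
  have hD1ne : δ * (1 - k) - 1 ≠ 0 := by nlinarith
  have h1Dne : 1 - δ * (1 - k) ≠ 0 := by nlinarith
  have hkne : k ≠ 0 := by positivity
  have hδne : δ ≠ 0 := ne_of_gt hδ0
  have hwne : w ≠ 0 := ne_of_gt hw
  have hδ1ne : 1 - δ ≠ 0 := by linarith
  have hBne : B ≠ 0 := ne_of_gt hB
  -- combination lemma
  have comb : ∀ x y t u v : ℝ, x + (-k) * t = u → y + (1 - δ * (1 - k)) * t = v →
      A ^ x * B ^ y * ytilde₁ ^ t = A ^ u * B ^ v := by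
    intro x y t u v hu hv
    rw [hytilde₁, Real.mul_rpow (le_of_lt (Real.rpow_pos_of_pos hA _))
        (le_of_lt (Real.rpow_pos_of_pos hB _)),
      ← Real.rpow_mul hA.le, ← Real.rpow_mul hB.le, ← hu, ← hv,
      Real.rpow_add hA, Real.rpow_add hB]
    ring
  have T1 : A ^ ((1 - k) * (1 - δ) / (1 - δ * (1 - k))) *
      ytilde₁ ^ (δ * (1 - k) / (δ * (1 - k) - 1)) =
      A ^ (1 - k) * B ^ (-(δ * (1 - k))) := by
    have h := comb ((1 - k) * (1 - δ) / (1 - δ * (1 - k))) 0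
      (δ * (1 - k) / (δ * (1 - k) - 1)) (1 - k) (-(δ * (1 - k)))
      (by rw [mul_div_assoc', div_add_div _ _ h1Dne hD1ne, div_eq_iff (mul_ne_zero h1Dne hD1ne)]; ring) (by field_simp <;> ring)
    simpa using h
  have T2 : B ^ ((1 - k) * (1 - δ) / k) * ytilde₁ ^ (-(1 - k) / k) =
      A ^ (1 - k) * B ^ (-(δ * (1 - k))) := by
    have h := comb 0 ((1 - k) * (1 - δ) / k) (-(1 - k) / k) (1 - k) (-(δ * (1 - k)))
      (by field_simp <;> ring) (by field_simp <;> ring)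
    simpa using h
  have h3 : w * A * ytilde₁ = (1 - δ) / δ * (A ^ (1 - k) * B ^ (-(δ * (1 - k)))) := by
    have hAy : A ^ (1:ℝ) * B ^ (0:ℝ) * ytilde₁ ^ (1:ℝ) =
        A ^ (1 - k) * B ^ (1 + -(δ * (1 - k))) := by
      exact comb 1 0 1 (1 - k) (1 + -(δ * (1 - k))) (by ring) (by ring)
    simp only [Real.rpow_one, Real.rpow_zero, mul_one] at hAy
    rw [mul_assoc, hAy, Real.rpow_add hB, Real.rpow_one]
    rw [hBdef]
    field_simp
  have key : f ytilde₁ =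
      ((δ * (1 - k) - 1) / (δ * (1 - k)) + k / (δ * (1 - k)) + (1 - δ) / δ) *
      (A ^ (1 - k) * B ^ (-(δ * (1 - k)))) := by
    rw [hf]
    linear_combination (δ * (1 - k) - 1) / (δ * (1 - k)) * T1 + k / (δ * (1 - k)) * T2 + h3
  have hc0 : (δ * (1 - k) - 1) / (δ * (1 - k)) + k / (δ * (1 - k)) + (1 - δ) / δ = 0 := by
    field_simp [(ne_of_lt (by linarith) : (1:ℝ) - k ≠ 0)]
    ring
  constructor
  · rw [key, hc0, zero_mul]
  · -- derivative
    have hfeq : f = fun z => (δ * (1 - k) - 1) / (δ * (1 - k)) *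
        Lbar ^ ((1 - k) * (1 - δ) / (1 - δ * (1 - k))) * z ^ (δ * (1 - k) / (δ * (1 - k) - 1)) +
        k / (δ * (1 - k)) * ((1 - δ) / (δ * w)) ^ ((1 - k) * (1 - δ) / k) * z ^ (-(1 - k) / k) +
        w * Lbar * z := funext hf
    have hd : HasDerivAt f
        ((δ * (1 - k) - 1) / (δ * (1 - k)) * Lbar ^ ((1 - k) * (1 - δ) / (1 - δ * (1 - k))) *
          (δ * (1 - k) / (δ * (1 - k) - 1) * ytilde₁ ^ (δ * (1 - k) / (δ * (1 - k) - 1) - 1)) +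
         k / (δ * (1 - k)) * ((1 - δ) / (δ * w)) ^ ((1 - k) * (1 - δ) / k) *
          (-(1 - k) / k * ytilde₁ ^ (-(1 - k) / k - 1)) +
         w * Lbar * 1) ytilde₁ := by
      rw [hfeq]
      exact (((Real.hasDerivAt_rpow_const (p := δ * (1 - k) / (δ * (1 - k) - 1))
          (Or.inl hy.ne')).const_mul _).add
        ((Real.hasDerivAt_rpow_const (p := -(1 - k) / k)
          (Or.inl hy.ne')).const_mul _)).add
        ((hasDerivAt_id ytilde₁).const_mul (w * Lbar))
    have T1' : A ^ ((1 - k) * (1 - δ) / (1 - δ * (1 - k))) *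
        ytilde₁ ^ (δ * (1 - k) / (δ * (1 - k) - 1) - 1) = A * B⁻¹ := by
      have h := comb ((1 - k) * (1 - δ) / (1 - δ * (1 - k))) 0
        (δ * (1 - k) / (δ * (1 - k) - 1) - 1) 1 (-1)
        (by rw [div_sub' hD1ne, mul_div_assoc', div_add_div _ _ h1Dne hD1ne, div_eq_iff (mul_ne_zero h1Dne hD1ne)]; ring) (by field_simp <;> ring)
      simpa [Real.rpow_one, Real.rpow_neg_one] using h
    have T2' : B ^ ((1 - k) * (1 - δ) / k) * ytilde₁ ^ (-(1 - k) / k - 1) = A * B⁻¹ := by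
      have h := comb 0 ((1 - k) * (1 - δ) / k) (-(1 - k) / k - 1) 1 (-1)
        (by field_simp <;> ring) (by field_simp <;> ring)
      simpa [Real.rpow_one, Real.rpow_neg_one] using h
    have h3' : w * A * 1 = (1 - δ) / δ * (A * B⁻¹) := by
      rw [hBdef]; field_simp
    rw [hd.deriv]
    have key' : (δ * (1 - k) - 1) / (δ * (1 - k)) *
          A ^ ((1 - k) * (1 - δ) / (1 - δ * (1 - k))) *
          (δ * (1 - k) / (δ * (1 - k) - 1) * ytilde₁ ^ (δ * (1 - k) / (δ * (1 - k) - 1) - 1)) +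
        k / (δ * (1 - k)) * B ^ ((1 - k) * (1 - δ) / k) *
          (-(1 - k) / k * ytilde₁ ^ (-(1 - k) / k - 1)) +
        w * A * 1 =
        ((δ * (1 - k) - 1) / (δ * (1 - k)) * (δ * (1 - k) / (δ * (1 - k) - 1)) +
         k / (δ * (1 - k)) * (-(1 - k) / k) + (1 - δ) / δ) * (A * B⁻¹) := by
      linear_combination
        ((δ * (1 - k) - 1) / (δ * (1 - k)) * (δ * (1 - k) / (δ * (1 - k) - 1))) * T1' +
        (k / (δ * (1 - k)) * (-(1 - k) / k)) * T2' + h3'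
    rw [key']
    have : (δ * (1 - k) - 1) / (δ * (1 - k)) * (δ * (1 - k) / (δ * (1 - k) - 1)) +
        k / (δ * (1 - k)) * (-(1 - k) / k) + (1 - δ) / δ = 0 := by
      field_simp [(ne_of_lt (by linarith) : (1:ℝ) - k ≠ 0)]
      ring
    rw [this, zero_mul]
end

section
/- With f and ỹ₁ as above, the second derivative f''(z) = (1/(δ(1-k)-1)) z^{(2-δ(1-k))/(δ(1-k)-1)} L̄^{(1-k)(1-δ)/(1-δ(1-k))} + (1/(δk))((1-δ)/(δw))^{(1-k)(1-δ)/k} z^{-(1+k)/k} is strictly positive if and only if z > L̄^{-k} ((1-δ(1-k))/(δk))^{k(δ(1-k)-1)/((1-k)(δ-1))} ((1-δ)/(δw))^{1-δ(1-k)}. -/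
/-- For z>0, the second derivative of f equals the stated expression and is
strictly positive iff z > L̄^{-k} ((1-δ(1-k))/(δk))^{k(δ(1-k)-1)/((1-k)(δ-1))} ((1-δ)/(δw))^{1-δ(1-k)}. -/
theorem stmt10 (k δ w Lbar : ℝ)
    (hk : 1 < k) (hδ0 : 0 < δ) (hδ1 : δ < 1) (hw : 0 < w) (hLbar : 0 < Lbar)
    (f : ℝ → ℝ)
    (hf : ∀ z, f z = (δ * (1 - k) - 1) / (δ * (1 - k)) *
      Lbar ^ ((1 - k) * (1 - δ) / (1 - δ * (1 - k))) * z ^ (δ * (1 - k) / (δ * (1 - k) - 1)) +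
      k / (δ * (1 - k)) * ((1 - δ) / (δ * w)) ^ ((1 - k) * (1 - δ) / k) * z ^ (-(1 - k) / k) +
      w * Lbar * z)
    (g : ℝ → ℝ)
    (hg : ∀ z, g z = 1 / (δ * (1 - k) - 1) * z ^ ((2 - δ * (1 - k)) / (δ * (1 - k) - 1)) *
      Lbar ^ ((1 - k) * (1 - δ) / (1 - δ * (1 - k))) +
      1 / (δ * k) * ((1 - δ) / (δ * w)) ^ ((1 - k) * (1 - δ) / k) * z ^ (-(1 + k) / k)) :
    ∀ z > (0 : ℝ),
      deriv (deriv f) z = g z ∧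
      (0 < g z ↔ Lbar ^ (-k) * ((1 - δ * (1 - k)) / (δ * k)) ^
          (k * (δ * (1 - k) - 1) / ((1 - k) * (δ - 1))) *
          ((1 - δ) / (δ * w)) ^ (1 - δ * (1 - k)) < z) := by
  intro z hz
  have hk0 : (0:ℝ) < k := lt_trans one_pos hk
  have h1k : 1 - k < 0 := by linarith
  have hcneg : δ * (1 - k) < 0 := mul_neg_of_pos_of_neg hδ0 h1k
  have hc0 : δ * (1 - k) ≠ 0 := ne_of_lt hcneg
  have hc1 : δ * (1 - k) - 1 < 0 := by linarith
  have hc1' : δ * (1 - k) - 1 ≠ 0 := ne_of_lt hc1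
  have hD : 0 < 1 - δ * (1 - k) := by linarith
  have hδk : 0 < δ * k := mul_pos hδ0 hk0
  have h1δ : 0 < 1 - δ := by linarith
  have hR : 0 < (1 - δ) / (δ * w) := div_pos h1δ (mul_pos hδ0 hw)
  have hk0' : k ≠ 0 := ne_of_gt hk0
  have h1k' : (1 - k) ≠ 0 := ne_of_lt h1k
  have hδ0' : δ ≠ 0 := ne_of_gt hδ0
  -- abbreviations (not `set`, just names)
  have hLp : 0 < Lbar ^ ((1 - k) * (1 - δ) / (1 - δ * (1 - k))) :=
    Real.rpow_pos_of_pos hLbar _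
  have hCp : 0 < ((1 - δ) / (δ * w)) ^ ((1 - k) * (1 - δ) / k) :=
    Real.rpow_pos_of_pos hR _
  set Lp := Lbar ^ ((1 - k) * (1 - δ) / (1 - δ * (1 - k))) with hLp_def
  set Cp := ((1 - δ) / (δ * w)) ^ ((1 - k) * (1 - δ) / k) with hCp_def
  set a : ℝ := δ * (1 - k) / (δ * (1 - k) - 1) with ha_def
  set b : ℝ := -(1 - k) / k with hb_def
  -- first derivative
  have hfe : f = fun x => (δ * (1 - k) - 1) / (δ * (1 - k)) * Lp * x ^ a +
      k / (δ * (1 - k)) * Cp * x ^ b + w * Lbar * x := funext hf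
  have hder1 : ∀ x : ℝ, x ≠ 0 →
      HasDerivAt f ((δ * (1 - k) - 1) / (δ * (1 - k)) * Lp * (a * x ^ (a - 1)) +
        k / (δ * (1 - k)) * Cp * (b * x ^ (b - 1)) + w * Lbar) x := by
    intro x hx
    rw [hfe]
    have h1 := (Real.hasDerivAt_rpow_const (p := a) (Or.inl hx)).const_mul
      ((δ * (1 - k) - 1) / (δ * (1 - k)) * Lp)
    have h2 := (Real.hasDerivAt_rpow_const (p := b) (Or.inl hx)).const_mul
      (k / (δ * (1 - k)) * Cp)
    have h3 : HasDerivAt (fun x : ℝ => w * Lbar * x) (w * Lbar) x := by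
      simpa using (hasDerivAt_id x).const_mul (w * Lbar)
    exact (h1.add h2).add h3
  have hd1eq : ∀ x : ℝ, x ≠ 0 → deriv f x =
      (δ * (1 - k) - 1) / (δ * (1 - k)) * Lp * (a * x ^ (a - 1)) +
        k / (δ * (1 - k)) * Cp * (b * x ^ (b - 1)) + w * Lbar :=
    fun x hx => (hder1 x hx).deriv
  have hev : deriv f =ᶠ[nhds z] (fun x =>
      (δ * (1 - k) - 1) / (δ * (1 - k)) * Lp * (a * x ^ (a - 1)) +
        k / (δ * (1 - k)) * Cp * (b * x ^ (b - 1)) + w * Lbar) := by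
    filter_upwards [eventually_ne_nhds hz.ne'] with x hx
    exact hd1eq x hx
  have hder2 : HasDerivAt (fun x =>
      (δ * (1 - k) - 1) / (δ * (1 - k)) * Lp * (a * x ^ (a - 1)) +
        k / (δ * (1 - k)) * Cp * (b * x ^ (b - 1)) + w * Lbar)
      ((δ * (1 - k) - 1) / (δ * (1 - k)) * Lp * (a * ((a - 1) * z ^ (a - 1 - 1))) +
        k / (δ * (1 - k)) * Cp * (b * ((b - 1) * z ^ (b - 1 - 1))) + 0) z := by
    have h1 := ((Real.hasDerivAt_rpow_const (p := a - 1) (Or.inl hz.ne')).const_mul a).const_mul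
      ((δ * (1 - k) - 1) / (δ * (1 - k)) * Lp)
    have h2 := ((Real.hasDerivAt_rpow_const (p := b - 1) (Or.inl hz.ne')).const_mul b).const_mul
      (k / (δ * (1 - k)) * Cp)
    exact (h1.add h2).add (hasDerivAt_const z (w * Lbar))
  have hdd : deriv (deriv f) z =
      (δ * (1 - k) - 1) / (δ * (1 - k)) * Lp * (a * ((a - 1) * z ^ (a - 1 - 1))) +
        k / (δ * (1 - k)) * Cp * (b * ((b - 1) * z ^ (b - 1 - 1))) + 0 := by
    rw [hev.deriv_eq]; exact hder2.deriv
  -- exponent identities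
  have hexp1 : a - 1 - 1 = (2 - δ * (1 - k)) / (δ * (1 - k) - 1) := by
    rw [ha_def, div_sub_one hc1', div_sub_one hc1']; congr 1; ring
  have hexp2 : b - 1 - 1 = -(1 + k) / k := by
    rw [hb_def, div_sub_one hk0', div_sub_one hk0']; congr 1; ring
  have hgeq : deriv (deriv f) z = g z := by
    rw [hdd, hg, hexp1, hexp2]
    have hco1 : (δ * (1 - k) - 1) / (δ * (1 - k)) * (a * (a - 1)) =
        1 / (δ * (1 - k) - 1) := by
      rw [ha_def]; field_simp; ring
    have hco2 : k / (δ * (1 - k)) * (b * (b - 1)) = 1 / (δ * k) := by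
      rw [hb_def]; field_simp; ring
    linear_combination (Lp * z ^ ((2 - δ * (1 - k)) / (δ * (1 - k) - 1))) * hco1 +
      (Cp * z ^ (-(1 + k) / k)) * hco2
  refine ⟨hgeq, ?_⟩
  -- part 2: positivity iff
  have hzp : ∀ e : ℝ, 0 < z ^ e := fun e => Real.rpow_pos_of_pos hz e
  set p : ℝ := (2 - δ * (1 - k)) / (δ * (1 - k) - 1) with hp_def
  set q : ℝ := -(1 + k) / k with hq_def
  have hgz : g z = 1 / (δ * k) * Cp * z ^ q - 1 / (1 - δ * (1 - k)) * z ^ p * Lp := by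
    rw [hg]
    have : (1:ℝ) / (δ * (1 - k) - 1) = -(1 / (1 - δ * (1 - k))) := by
      field_simp
      ring
    rw [this]; ring
  have hPpos : 0 < 1 / (1 - δ * (1 - k)) * z ^ p * Lp :=
    mul_pos (mul_pos (by positivity) (hzp p)) hLp
  have hQpos : 0 < 1 / (δ * k) * Cp * z ^ q :=
    mul_pos (mul_pos (by positivity) hCp) (hzp q)
  have hTpos : 0 < Lbar ^ (-k) * ((1 - δ * (1 - k)) / (δ * k)) ^
      (k * (δ * (1 - k) - 1) / ((1 - k) * (δ - 1))) *
      ((1 - δ) / (δ * w)) ^ (1 - δ * (1 - k)) := by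
    have h1 : 0 < (1 - δ * (1 - k)) / (δ * k) := div_pos hD hδk
    positivity
  rw [hgz, sub_pos]
  rw [← Real.log_lt_log_iff hPpos hQpos, ← Real.log_lt_log_iff hTpos hz]
  -- expand logs
  have hlogP : Real.log (1 / (1 - δ * (1 - k)) * z ^ p * Lp) =
      -Real.log (1 - δ * (1 - k)) + p * Real.log z +
        (1 - k) * (1 - δ) / (1 - δ * (1 - k)) * Real.log Lbar := by
    rw [Real.log_mul (by positivity) (ne_of_gt hLp),
      Real.log_mul (by positivity) (ne_of_gt (hzp p)), hLp_def,
      Real.log_rpow hz, Real.log_rpow hLbar, one_div, Real.log_inv]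
  have hlogQ : Real.log (1 / (δ * k) * Cp * z ^ q) =
      -Real.log (δ * k) + (1 - k) * (1 - δ) / k * Real.log ((1 - δ) / (δ * w)) +
        q * Real.log z := by
    rw [Real.log_mul (by positivity) (ne_of_gt (hzp q)),
      Real.log_mul (by positivity) (ne_of_gt hCp), hCp_def,
      Real.log_rpow hz, Real.log_rpow hR, one_div, Real.log_inv]
  have hlogT : Real.log (Lbar ^ (-k) * ((1 - δ * (1 - k)) / (δ * k)) ^
      (k * (δ * (1 - k) - 1) / ((1 - k) * (δ - 1))) *
      ((1 - δ) / (δ * w)) ^ (1 - δ * (1 - k))) =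
      -k * Real.log Lbar +
        k * (δ * (1 - k) - 1) / ((1 - k) * (δ - 1)) *
          (Real.log (1 - δ * (1 - k)) - Real.log (δ * k)) +
        (1 - δ * (1 - k)) * Real.log ((1 - δ) / (δ * w)) := by
    rw [Real.log_mul (by positivity) (ne_of_gt (Real.rpow_pos_of_pos hR _)),
      Real.log_mul (by positivity) (ne_of_gt (Real.rpow_pos_of_pos (div_pos hD hδk) _)),
      Real.log_rpow hLbar, Real.log_rpow (div_pos hD hδk), Real.log_rpow hR,
      Real.log_div (ne_of_gt hD) (ne_of_gt hδk)]
  rw [hlogP, hlogQ, hlogT]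
  -- now a linear-in-logs equivalence
  set LZ := Real.log z
  set LL := Real.log Lbar
  set LR := Real.log ((1 - δ) / (δ * w))
  set L1 := Real.log (1 - δ * (1 - k))
  set L2 := Real.log (δ * k)
  have hm : p - q = (1 - k) * (1 - δ) / (k * (1 - δ * (1 - k))) := by
    rw [hp_def, hq_def]; field_simp; ring
  have hmneg : p - q < 0 := by
    rw [hm]
    apply div_neg_of_neg_of_pos
    · exact mul_neg_of_neg_of_pos h1k h1δ
    · exact mul_pos hk0 hD
  have hMdiv : (L1 - L2 + (1 - k) * (1 - δ) / k * LR -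
      (1 - k) * (1 - δ) / (1 - δ * (1 - k)) * LL) / (p - q) =
      -k * LL + k * (δ * (1 - k) - 1) / ((1 - k) * (δ - 1)) * (L1 - L2) +
        (1 - δ * (1 - k)) * LR := by
    rw [hm]
    have h1 : (1 - k) ≠ 0 := ne_of_lt h1k
    have h2 : (1 - δ) ≠ 0 := ne_of_gt h1δ
    have h3 : (1 - δ * (1 - k)) ≠ 0 := ne_of_gt hD
    have h4 : (δ - 1) ≠ 0 := by intro h; apply h2; linarith
    rw [show δ * (1 - k) - 1 = -(1 - δ * (1 - k)) by ring]
    generalize 1 - δ * (1 - k) = D at h3 ⊢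
    field_simp
    ring
  constructor
  · intro h
    rw [← hMdiv]
    rw [div_lt_iff_of_neg hmneg]
    linarith [h]
  · intro h
    rw [← hMdiv] at h
    rw [div_lt_iff_of_neg hmneg] at h
    linarith [h]
end

section
/- Let v_PR be defined piecewise by v_PR(z) = B₂ z^{n₂} + ((1-δ(1-k))/(δ(1-k))) K₁ L̄^{(1-k)(1-δ)/(1-δ(1-k))} z^{δ(1-k)/(δ(1-k)-1)} - (d/r)z for 0<z<ẑ, and v_PR(z) = v_PR(ẑ) - R_post(z-ẑ) for z≥ẑ, where B₂ = B_{2,PR} and ẑ = ẑ_PR satisfy the two smooth-fit equations: (C¹) n₂B₂ẑ^{n₂-1} - K₁L̄^{(1-k)(1-δ)/(1-δ(1-k))}ẑ^{1/(δ(1-k)-1)} - d/r + R_post = 0 and (C²) n₂(n₂-1)B₂ẑ^{n₂-2} - (K₁/(δ(1-k)-1))L̄^{(1-k)(1-δ)/(1-δ(1-k))}ẑ^{(2-δ(1-k))/(δ(1-k)-1)} = 0. Then these two equations have the unique solution ẑ = L̄^{(1-k)(1-δ)}[((1-n₂)(1-δ(1-k)))/(n₂(δ(1-k)-1)-δ(1-k))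 · (R_post-d/r)/K₁]^{δ(1-k)-1} and B₂ẑ^{n₂-1} = (K₁ δ(1-k)/((δ(1-k)-1)n₂²)) L̄^{(1-k)(1-δ)/(1-δ(1-k))} ẑ^{1/(δ(1-k)-1)} + (1/n₂²)(d/r - R_post). -/
/-- The two smooth-fit equations (C¹) and (C²) uniquely determine the free
boundary ẑ = ẑ_PR and the combination B₂ ẑ^{n₂-1} of the post-retirement dual problem. -/
theorem stmt17 (k δ r d Rpost Lbar K₁ n₂ B₂ zhat : ℝ)
    (hk : 1 < k) (hδ0 : 0 < δ) (hδ1 : δ < 1) (hLbar : 0 < Lbar)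
    (hr : 0 < r) (hd : 0 ≤ d) (hK₁ : 0 < K₁) (hn₂ : 1 < n₂)
    (hRpost : d / r < Rpost) (hzhat : 0 < zhat)
    (hC1 : n₂ * B₂ * zhat ^ (n₂ - 1) -
      K₁ * Lbar ^ ((1 - k) * (1 - δ) / (1 - δ * (1 - k))) * zhat ^ (1 / (δ * (1 - k) - 1)) -
      d / r + Rpost = 0)
    (hC2 : n₂ * (n₂ - 1) * B₂ * zhat ^ (n₂ - 2) -
      K₁ / (δ * (1 - k) - 1) * Lbar ^ ((1 - k) * (1 - δ) / (1 - δ * (1 - k))) *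
        zhat ^ ((2 - δ * (1 - k)) / (δ * (1 - k) - 1)) = 0) :
    zhat = Lbar ^ ((1 - k) * (1 - δ)) *
      ((1 - n₂) * (1 - δ * (1 - k)) / (n₂ * (δ * (1 - k) - 1) - δ * (1 - k)) *
        ((Rpost - d / r) / K₁)) ^ (δ * (1 - k) - 1) ∧
    B₂ * zhat ^ (n₂ - 1) =
      K₁ * (δ * (1 - k)) / ((δ * (1 - k) - 1) * n₂ ^ 2) *
        Lbar ^ ((1 - k) * (1 - δ) / (1 - δ * (1 - k))) * zhat ^ (1 / (δ * (1 - k) - 1)) +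
      1 / n₂ ^ 2 * (d / r - Rpost) := by
  have h1k : 1 - k < 0 := by linarith
  have hδ1k : δ * (1 - k) < 0 := mul_neg_of_pos_of_neg hδ0 h1k
  have hα : δ * (1 - k) - 1 < -1 := by linarith
  have hαne : δ * (1 - k) - 1 ≠ 0 := by linarith
  have hn₂0 : (0:ℝ) < n₂ := by linarith
  have hn₂ne : n₂ ≠ 0 := ne_of_gt hn₂0
  have hn₂1pos : (0:ℝ) < n₂ - 1 := by linarith
  have hn₂1 : n₂ - 1 ≠ 0 := ne_of_gt hn₂1pos
  have hrne : r ≠ 0 := ne_of_gt hr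
  have hK₁ne : K₁ ≠ 0 := ne_of_gt hK₁
  have hLe : (0:ℝ) < Lbar ^ ((1 - k) * (1 - δ) / (1 - δ * (1 - k))) :=
    Real.rpow_pos_of_pos hLbar _
  have hP : (0:ℝ) < zhat ^ (1 / (δ * (1 - k) - 1)) := Real.rpow_pos_of_pos hzhat _
  -- multiply (C²) by zhat
  have e1 : zhat ^ (n₂ - 1) = zhat ^ (n₂ - 2) * zhat := by
    rw [← Real.rpow_add_one (ne_of_gt hzhat)]; ring_nf
  have e2 : zhat ^ (1 / (δ * (1 - k) - 1)) =
      zhat ^ ((2 - δ * (1 - k)) / (δ * (1 - k) - 1)) * zhat := by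
    rw [← Real.rpow_add_one (ne_of_gt hzhat)]
    congr 1
    field_simp
    norm_num
  have h2 : (δ * (1 - k) - 1) * (n₂ * (n₂ - 1) * (B₂ * zhat ^ (n₂ - 1))) =
      K₁ * Lbar ^ ((1 - k) * (1 - δ) / (1 - δ * (1 - k))) *
        zhat ^ (1 / (δ * (1 - k) - 1)) := by
    rw [e1, e2]
    field_simp at hC2
    linear_combination zhat * hC2
  have h1 : n₂ * (B₂ * zhat ^ (n₂ - 1)) =
      K₁ * Lbar ^ ((1 - k) * (1 - δ) / (1 - δ * (1 - k))) *
        zhat ^ (1 / (δ * (1 - k) - 1)) + d / r - Rpost := by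
    linear_combination hC1
  have hD : (δ * (1 - k) - 1) * (n₂ - 1) - 1 ≠ 0 := by
    have : (δ * (1 - k) - 1) * (n₂ - 1) < 0 :=
      mul_neg_of_neg_of_pos (by linarith) hn₂1pos
    intro h; linarith
  have hAP : K₁ * Lbar ^ ((1 - k) * (1 - δ) / (1 - δ * (1 - k))) *
      zhat ^ (1 / (δ * (1 - k) - 1)) * ((δ * (1 - k) - 1) * (n₂ - 1) - 1) =
      (δ * (1 - k) - 1) * (n₂ - 1) * (Rpost - d / r) := by
    linear_combination h2 - (δ * (1 - k) - 1) * (n₂ - 1) * h1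
  have hAPdiv : Lbar ^ ((1 - k) * (1 - δ) / (1 - δ * (1 - k))) *
      zhat ^ (1 / (δ * (1 - k) - 1)) =
      (δ * (1 - k) - 1) * (n₂ - 1) * (Rpost - d / r) /
        (((δ * (1 - k) - 1) * (n₂ - 1) - 1) * K₁) := by
    rw [eq_div_iff (mul_ne_zero hD hK₁ne)]
    linear_combination hAP
  constructor
  · have hden : n₂ * (δ * (1 - k) - 1) - δ * (1 - k) ≠ 0 := by
      intro h; apply hD; linarith
    have hB : (1 - n₂) * (1 - δ * (1 - k)) / (n₂ * (δ * (1 - k) - 1) - δ * (1 - k)) *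
        ((Rpost - d / r) / K₁) =
        Lbar ^ ((1 - k) * (1 - δ) / (1 - δ * (1 - k))) *
          zhat ^ (1 / (δ * (1 - k) - 1)) := by
      rw [hAPdiv]
      field_simp
      ring
    rw [hB, Real.mul_rpow hLe.le hP.le, ← Real.rpow_mul hLbar.le,
      ← Real.rpow_mul hzhat.le, one_div, inv_mul_cancel₀ hαne, Real.rpow_one,
      ← mul_assoc, ← Real.rpow_add hLbar]
    have hz : (1 - k) * (1 - δ) +
        (1 - k) * (1 - δ) / (1 - δ * (1 - k)) * (δ * (1 - k) - 1) = 0 := by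
      have h0 : (1:ℝ) - δ * (1 - k) ≠ 0 := by linarith
      rw [show δ * (1 - k) - 1 = -(1 - δ * (1 - k)) by ring, mul_neg, div_mul_cancel₀ _ h0]
      ring
    rw [hz, Real.rpow_zero, one_mul]
  · have hne2 : (δ * (1 - k) - 1) * n₂ ^ 2 ≠ 0 :=
      mul_ne_zero hαne (pow_ne_zero 2 hn₂ne)
    have hX : B₂ * zhat ^ (n₂ - 1) =
        ((δ * (1 - k)) * (K₁ * Lbar ^ ((1 - k) * (1 - δ) / (1 - δ * (1 - k))) *
          zhat ^ (1 / (δ * (1 - k) - 1))) + (δ * (1 - k) - 1) * (d / r - Rpost)) /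
          ((δ * (1 - k) - 1) * n₂ ^ 2) := by
      rw [eq_div_iff hne2]
      linear_combination (δ * (1 - k) - 1) * h1 + h2
    rw [hX]
    field_simp
end
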